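/- Let φ be a Bernstein function and define the Bernstein-gamma function W_φ(z) = (e^{-γ_φ z}/φ(z)) · ∏_{k=1}^∞ (φ(k)/φ(k+z)) e^{(φ'(k)/φ(k)) z}, where γ_φ = lim_{n→∞} (Σ_{k=1}^n φ'(k)/φ(k) − log φ(n)). Then the constant γ_φ exists and satisfies −log φ(1) ≤ γ_φ ≤ φ'(1)/φ(1) − log φ(1). -/

import Mathlib

open MeasureTheory Filter Set

/-- A Bernstein function, given by its representing triplet `(κ, δ, μ)`:
`φ(u) = κ + δ·u + ∫₀^∞ (1 - e^{-u y}) μ(dy)`, with `κ, δ ≥ 0`,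
`μ` a nonnegative measure on `(0,∞)` with `∫ min(1,y) μ(dy) < ∞`, and `φ ≢ 0`. -/
structure BernsteinFn where
  κ : ℝ
  δ : ℝ
  μ : Measure ℝ
  hκ : 0 ≤ κ
  hδ : 0 ≤ δ
  hsupp : μ (Set.Iic 0) = 0
  hint : Integrable (fun y : ℝ => min 1 y) μ
  nontriv : ¬ (κ = 0 ∧ δ = 0 ∧ μ = 0)

/-- The Bernstein function as a real function on `(0,∞)`. -/
noncomputable def BernsteinFn.toFun (φ : BernsteinFn) (u : ℝ) : ℝ :=
  φ.κ + φ.δ * u + ∫ y, (1 - Real.exp (-(u * y))) ∂φ.μ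

/-- The holomorphic extension of the Bernstein function to the right half-plane. -/
noncomputable def BernsteinFn.toFunC (φ : BernsteinFn) (z : ℂ) : ℂ :=
  (φ.κ : ℂ) + (φ.δ : ℂ) * z + ∫ y, (1 - Complex.exp (-(z * (y : ℂ)))) ∂φ.μ

/-- The derivative of the Bernstein function: `φ'(u) = δ + ∫₀^∞ y e^{-u y} μ(dy)`. -/
noncomputable def BernsteinFn.deriv1 (φ : BernsteinFn) (u : ℝ) : ℝ :=
  φ.δ + ∫ y, y * Real.exp (-(u * y)) ∂φ.μ

namespace BernsteinFn

variable (φ : BernsteinFn)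

lemma ae_pos : ∀ᵐ y ∂φ.μ, 0 < y := by
  rw [ae_iff]
  convert φ.hsupp using 2
  ext y
  simp [not_lt]

lemma int_one_sub (u : ℝ) (hu : 0 ≤ u) :
    Integrable (fun y : ℝ => 1 - Real.exp (-(u * y))) φ.μ := by
  refine Integrable.mono' (φ.hint.const_mul (max 1 u)) ?_ ?_
  · exact (Continuous.aestronglyMeasurable (by continuity))
  · filter_upwards [φ.ae_pos] with y hy
    have h1 : Real.exp (-(u*y)) ≤ 1 := Real.exp_le_one_iff.mpr (by nlinarith)
    have h2 : 1 - u*y ≤ Real.exp (-(u*y)) := by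
      have := Real.add_one_le_exp (-(u*y)); linarith
    have hEpos := (Real.exp_pos (-(u*y))).le
    rw [Real.norm_eq_abs, abs_of_nonneg (by linarith)]
    rcases le_total y 1 with h | h
    · have : 1 - Real.exp (-(u*y)) ≤ u * y := by linarith
      calc 1 - Real.exp (-(u*y)) ≤ u * y := this
        _ ≤ max 1 u * min 1 y := by
            rw [min_eq_right h]
            exact mul_le_mul_of_nonneg_right (le_max_right 1 u) hy.le
    · calc 1 - Real.exp (-(u*y)) ≤ 1 := by linarith
        _ ≤ max 1 u * min 1 y := by
            rw [min_eq_left h]; simpa using le_max_left 1 u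

lemma int_mul_exp (u : ℝ) (hu : 1 ≤ u) :
    Integrable (fun y : ℝ => y * Real.exp (-(u * y))) φ.μ := by
  refine Integrable.mono' φ.hint ?_ ?_
  · exact (Continuous.aestronglyMeasurable (by continuity))
  · filter_upwards [φ.ae_pos] with y hy
    have hE : Real.exp (-(u*y)) ≤ Real.exp (-y) :=
      Real.exp_le_exp.mpr (by nlinarith)
    have hEpos := Real.exp_pos (-(u*y))
    rw [Real.norm_eq_abs, abs_of_nonneg (by positivity)]
    rcases le_total y 1 with h | h
    · rw [min_eq_right h]
      nlinarith [Real.exp_le_one_iff.mpr (show -(u*y) ≤ 0 by nlinarith)]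
    · rw [min_eq_left h]
      have : y ≤ Real.exp (y - 1) := by
        have := Real.add_one_le_exp (y - 1); linarith
      calc y * Real.exp (-(u*y)) ≤ y * Real.exp (-y) :=
            mul_le_mul_of_nonneg_left hE hy.le
        _ ≤ Real.exp (y-1) * Real.exp (-y) :=
            mul_le_mul_of_nonneg_right this (Real.exp_pos _).le
        _ = Real.exp (-1) := by rw [← Real.exp_add]; ring_nf
        _ ≤ 1 := Real.exp_le_one_iff.mpr (by norm_num)

lemma integral_nonneg' (u : ℝ) (hu : 0 ≤ u) :
    0 ≤ ∫ y, (1 - Real.exp (-(u * y))) ∂φ.μ := by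
  refine integral_nonneg_of_ae ?_
  filter_upwards [φ.ae_pos] with y hy
  have := Real.exp_le_one_iff.mpr (show -(u*y) ≤ 0 by nlinarith)
  simp only [Pi.zero_apply]
  linarith

lemma toFun_pos (u : ℝ) (hu : 0 < u) : 0 < φ.toFun u := by
  unfold BernsteinFn.toFun
  have hI := φ.integral_nonneg' u hu.le
  rcases lt_or_eq_of_le φ.hκ with hκ | hκ
  · nlinarith [mul_nonneg φ.hδ hu.le]
  rcases lt_or_eq_of_le φ.hδ with hδ | hδ
  · nlinarith
  have hμ : φ.μ ≠ 0 := fun h => φ.nontriv ⟨hκ.symm, hδ.symm, h⟩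
  have hpos : 0 < ∫ y, (1 - Real.exp (-(u * y))) ∂φ.μ := by
    rw [integral_pos_iff_support_of_nonneg_ae ?_ (φ.int_one_sub u hu.le)]
    · have hsub : Set.Ioi (0:ℝ) ⊆ Function.support (fun y => 1 - Real.exp (-(u*y))) := by
        intro y hy
        simp only [Function.mem_support]
        have : Real.exp (-(u*y)) < 1 := Real.exp_lt_one_iff.mpr (by nlinarith [mem_Ioi.mp hy])
        intro h; linarith
      have huniv : φ.μ (Set.Ioi 0) ≠ 0 := by
        intro h
        apply hμ
        have : φ.μ Set.univ = 0 := by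
          have : (Set.univ : Set ℝ) = Set.Iic 0 ∪ Set.Ioi 0 := by
            ext x; simp [le_or_gt]
          rw [this]
          exact le_antisymm ((measure_union_le _ _).trans (by rw [φ.hsupp, h]; simp)) zero_le
        exact Measure.measure_univ_eq_zero.mp this
      exact lt_of_lt_of_le (pos_iff_ne_zero.mpr huniv) (measure_mono hsub)
    · filter_upwards [φ.ae_pos] with y hy
      have := Real.exp_le_one_iff.mpr (show -(u*y) ≤ 0 by nlinarith)
      simp only [Pi.zero_apply]; linarith
  nlinarith

lemma toFun_mono {u v : ℝ} (hu : 0 ≤ u) (huv : u ≤ v) : φ.toFun u ≤ φ.toFun v := by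
  unfold BernsteinFn.toFun
  have hI : (∫ y, (1 - Real.exp (-(u * y))) ∂φ.μ) ≤ ∫ y, (1 - Real.exp (-(v * y))) ∂φ.μ := by
    refine integral_mono_ae (φ.int_one_sub u hu) (φ.int_one_sub v (hu.trans huv)) ?_
    filter_upwards [φ.ae_pos] with y hy
    have : Real.exp (-(v*y)) ≤ Real.exp (-(u*y)) := Real.exp_le_exp.mpr (by nlinarith)
    linarith
  nlinarith [mul_le_mul_of_nonneg_left huv φ.hδ]

/-- `φ(u+1) - φ(u) ≤ φ'(u)` -/
lemma deriv_ge (u : ℝ) (hu : 1 ≤ u) : φ.toFun (u+1) - φ.toFun u ≤ φ.deriv1 u := by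
  unfold BernsteinFn.toFun BernsteinFn.deriv1
  have key : (∫ y, (1 - Real.exp (-((u+1) * y))) ∂φ.μ)
      ≤ ∫ y, ((1 - Real.exp (-(u * y))) + y * Real.exp (-(u * y))) ∂φ.μ := by
    refine integral_mono_ae (φ.int_one_sub (u+1) (by linarith))
      ((φ.int_one_sub u (by linarith)).add (φ.int_mul_exp u hu)) ?_
    filter_upwards [φ.ae_pos] with y hy
    have h1 : 1 - y ≤ Real.exp (-y) := by have := Real.add_one_le_exp (-y); linarith
    have h2 : Real.exp (-((u+1)*y)) = Real.exp (-(u*y)) * Real.exp (-y) := by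
      rw [← Real.exp_add]; ring_nf
    have hEpos := (Real.exp_pos (-(u*y))).le
    rw [h2]; nlinarith
  rw [integral_add (φ.int_one_sub u (by linarith)) (φ.int_mul_exp u hu)] at key
  linarith

/-- `φ'(u+1) ≤ φ(u+1) - φ(u)` -/
lemma deriv_le (u : ℝ) (hu : 1 ≤ u) : φ.deriv1 (u+1) ≤ φ.toFun (u+1) - φ.toFun u := by
  unfold BernsteinFn.toFun BernsteinFn.deriv1
  have key : (∫ y, ((1 - Real.exp (-(u * y))) + y * Real.exp (-((u+1) * y))) ∂φ.μ)
      ≤ ∫ y, (1 - Real.exp (-((u+1) * y))) ∂φ.μ := by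
    refine integral_mono_ae
      ((φ.int_one_sub u (by linarith)).add (φ.int_mul_exp (u+1) (by linarith)))
      (φ.int_one_sub (u+1) (by linarith)) ?_
    filter_upwards [φ.ae_pos] with y hy
    have h1 : y + 1 ≤ Real.exp y := Real.add_one_le_exp y
    have h2 : Real.exp (-((u+1)*y)) = Real.exp (-(u*y)) * Real.exp (-y) := by
      rw [← Real.exp_add]; ring_nf
    have h3 : Real.exp (-(u*y)) = Real.exp (-((u+1)*y)) * Real.exp y := by
      rw [← Real.exp_add]; ring_nf
    have hEpos := (Real.exp_pos (-((u+1)*y))).le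
    rw [h3]; nlinarith
  rw [integral_add (φ.int_one_sub u (by linarith)) (φ.int_mul_exp (u+1) (by linarith))] at key
  linarith

end BernsteinFn

lemma log_le_ratio {a b : ℝ} (ha : 0 < a) (hab : a ≤ b) :
    Real.log b - Real.log a ≤ (b - a) / a := by
  have hb : 0 < b := lt_of_lt_of_le ha hab
  rw [← Real.log_div (by linarith) ha.ne']
  have := Real.log_le_sub_one_of_pos (show (0:ℝ) < b/a by positivity)
  calc Real.log (b/a) ≤ b/a - 1 := this
    _ = (b-a)/a := by field_simp
lemma ratio_le_log {a b : ℝ} (ha : 0 < a) (hab : a ≤ b) :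
    (b - a) / b ≤ Real.log b - Real.log a := by
  have hb : 0 < b := lt_of_lt_of_le ha hab
  have := Real.log_le_sub_one_of_pos (show (0:ℝ) < a/b by positivity)
  rw [← Real.log_div (by linarith) ha.ne']
  rw [Real.log_div ha.ne' hb.ne'] at this
  rw [Real.log_div hb.ne' ha.ne']
  have : Real.log a - Real.log b ≤ a/b - 1 := this
  have h2 : a/b - 1 = -((b-a)/b) := by field_simp; ring
  linarith

/-- The constant `γ_φ = lim_{n→∞} (Σ_{k=1}^n φ'(k)/φ(k) − log φ(n))` exists and satisfies
`−log φ(1) ≤ γ_φ ≤ φ'(1)/φ(1) − log φ(1)`. -/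
theorem stmt15 (φ : BernsteinFn) :
    ∃ γ : ℝ,
      Filter.Tendsto
        (fun n : ℕ =>
          (∑ k ∈ Finset.Icc 1 n, φ.deriv1 (k : ℝ) / φ.toFun (k : ℝ))
            - Real.log (φ.toFun (n : ℝ)))
        Filter.atTop (nhds γ) ∧
      γ ∈ Set.Icc (-Real.log (φ.toFun 1)) (φ.deriv1 1 / φ.toFun 1 - Real.log (φ.toFun 1)) := by
  set g : ℕ → ℝ := fun k => φ.deriv1 (k : ℝ) / φ.toFun (k : ℝ) with hg
  set f : ℕ → ℝ := fun n => Real.log (φ.toFun (n : ℝ)) with hf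
  set a : ℕ → ℝ := fun n => (∑ k ∈ Finset.Icc 1 n, g k) - f n with ha
  have hP : ∀ k : ℕ, 1 ≤ k → 0 < φ.toFun (k : ℝ) := fun k hk =>
    φ.toFun_pos _ (by exact_mod_cast Nat.pos_of_ne_zero (by omega))
  have hMono : ∀ k : ℕ, 1 ≤ k → φ.toFun (k : ℝ) ≤ φ.toFun ((k+1 : ℕ) : ℝ) := by
    intro k hk
    refine φ.toFun_mono (by positivity) (by push_cast; linarith)
  -- (i): f (k+1) - f k ≤ g k for k ≥ 1
  have hi : ∀ k : ℕ, 1 ≤ k → f (k+1) - f k ≤ g k := by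
    intro k hk
    have h1 := φ.deriv_ge (k : ℝ) (by exact_mod_cast hk)
    have h2 := log_le_ratio (hP k hk) (hMono k hk)
    have hcast : ((k:ℝ) + 1) = ((k+1 : ℕ) : ℝ) := by push_cast; ring
    rw [hcast] at h1
    simp only [hg, hf]
    calc Real.log (φ.toFun ((k+1:ℕ):ℝ)) - Real.log (φ.toFun (k:ℝ))
        ≤ (φ.toFun ((k+1:ℕ):ℝ) - φ.toFun (k:ℝ)) / φ.toFun (k:ℝ) := h2
      _ ≤ φ.deriv1 (k:ℝ) / φ.toFun (k:ℝ) := by gcongr; exact (hP k hk).le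
  -- (ii): g (k+1) ≤ f (k+1) - f k for k ≥ 1
  have hii : ∀ k : ℕ, 1 ≤ k → g (k+1) ≤ f (k+1) - f k := by
    intro k hk
    have h1 := φ.deriv_le (k : ℝ) (by exact_mod_cast hk)
    have h2 := ratio_le_log (hP k hk) (hMono k hk)
    have hcast : ((k:ℝ) + 1) = ((k+1 : ℕ) : ℝ) := by push_cast; ring
    rw [hcast] at h1
    simp only [hg, hf]
    calc φ.deriv1 ((k+1:ℕ):ℝ) / φ.toFun ((k+1:ℕ):ℝ)
        ≤ (φ.toFun ((k+1:ℕ):ℝ) - φ.toFun (k:ℝ)) / φ.toFun ((k+1:ℕ):ℝ) := by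
          gcongr; exact (hP (k+1) (by omega)).le
      _ ≤ Real.log (φ.toFun ((k+1:ℕ):ℝ)) - Real.log (φ.toFun (k:ℝ)) := h2
  -- lower bound on partial sums
  have hsum : ∀ n : ℕ, f (n+1) - f 1 ≤ ∑ k ∈ Finset.Icc 1 n, g k := by
    intro n
    induction n with
    | zero => simp
    | succ n ih =>
      rw [Finset.sum_Icc_succ_top (by omega)]
      have := hi (n+1) (by omega)
      linarith
  have hfmono : ∀ n : ℕ, 1 ≤ n → f n ≤ f (n+1) := by
    intro n hn
    exact Real.log_le_log (hP n hn) (hMono n hn)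
  have hlb : ∀ n : ℕ, 1 ≤ n → -f 1 ≤ a n := by
    intro n hn
    have h1 := hsum n
    have h2 := hfmono n hn
    simp only [ha]
    linarith
  set b : ℕ → ℝ := fun n => a (n+1) with hb
  have hanti : Antitone b := by
    apply antitone_nat_of_succ_le
    intro n
    simp only [hb, ha]
    rw [Finset.sum_Icc_succ_top (by omega : 1 ≤ n+1+1)]
    have := hii (n+1) (by omega)
    linarith
  have hbdd : BddBelow (Set.range b) := by
    refine ⟨-f 1, ?_⟩
    rintro x ⟨n, rfl⟩
    exact hlb (n+1) (by omega)
  refine ⟨⨅ n, b n, ?_, ?_, ?_⟩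
  · have h1 : Filter.Tendsto b Filter.atTop (nhds (⨅ n, b n)) :=
      tendsto_atTop_ciInf hanti hbdd
    have : Filter.Tendsto a Filter.atTop (nhds (⨅ n, b n)) :=
      (Filter.tendsto_add_atTop_iff_nat 1).mp h1
    exact this
  · show -Real.log (φ.toFun 1) ≤ _
    have : -Real.log (φ.toFun 1) = -f 1 := by simp [hf]
    rw [this]
    exact le_ciInf fun n => hlb (n+1) (by omega)
  · have h0 : (⨅ n, b n) ≤ b 0 := ciInf_le hbdd 0
    have : b 0 = φ.deriv1 1 / φ.toFun 1 - Real.log (φ.toFun 1) := by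
      simp [hb, ha, hg, hf]
    rw [this] at h0
    exact h0
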